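/- The function A ↦ tr(A⁻¹) is convex on the set of positive definite n×n Hermitian matrices; that is, for all positive definite Hermitian A, B and t ∈ [0,1], tr((tA + (1−t)B)⁻¹) ≤ t·tr(A⁻¹) + (1−t)·tr(B⁻¹). -/

import Mathlib

open scoped ComplexOrder
open Matrix

lemma posDef_smul' {n : ℕ} (c : ℝ) (hc : 0 < c) {A : Matrix (Fin n) (Fin n) ℂ}
    (hA : A.PosDef) : ((c : ℂ) • A).PosDef := by
  refine Matrix.posDef_iff_dotProduct_mulVec.mpr ⟨?_, fun x hx => ?_⟩
  · unfold Matrix.IsHermitian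
    rw [conjTranspose_smul, hA.isHermitian.eq]
    congr 1
    simp
  · rw [smul_mulVec, dotProduct_smul]
    have h1 : (0:ℂ) < (c:ℂ) := by
      rw [Complex.lt_def]
      simp [hc]
    exact mul_pos h1 (hA.dotProduct_mulVec_pos hx)

lemma trace_re_nonneg {n : ℕ} {M : Matrix (Fin n) (Fin n) ℂ} (hM : M.PosSemidef) :
    0 ≤ (M.trace).re := by
  rw [Matrix.trace]
  simp only [Complex.re_sum, Matrix.diag]
  apply Finset.sum_nonneg
  intro i _
  have := hM.dotProduct_mulVec_nonneg (Pi.single i 1)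
  have h : star (Pi.single i 1 : Fin n → ℂ) ⬝ᵥ M *ᵥ Pi.single i 1 = M i i := by
    simp [dotProduct, Pi.single_apply, apply_ite, Matrix.mulVec_single]
  rw [h] at this
  exact (Complex.le_def.mp this).1

lemma key_ineq {n : ℕ} {A : Matrix (Fin n) (Fin n) ℂ} (hA : A.PosDef)
    (X : Matrix (Fin n) (Fin n) ℂ) :
    2 * (X.trace).re - ((Xᴴ * A * X).trace).re ≤ ((A⁻¹).trace).re := by
  have hinv : A * A⁻¹ = 1 := Matrix.mul_nonsing_inv _ (hA.det_pos.ne'.isUnit)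
  have hinv' : A⁻¹ * A = 1 := Matrix.nonsing_inv_mul _ (hA.det_pos.ne'.isUnit)
  set Y := X - A⁻¹ with hY
  have hps : (Yᴴ * A * Y).PosSemidef := hA.posSemidef.conjTranspose_mul_mul_same Y
  have htr := trace_re_nonneg hps
  have hexp : Yᴴ * A * Y = Xᴴ * A * X - Xᴴ - A⁻¹ * A * X + A⁻¹ := by
    rw [hY, conjTranspose_sub, hA.isHermitian.inv.eq]
    rw [Matrix.sub_mul, Matrix.sub_mul, Matrix.mul_sub, Matrix.mul_sub]
    rw [Matrix.mul_assoc Xᴴ A A⁻¹, hinv, Matrix.mul_one,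
        Matrix.mul_assoc A⁻¹ A A⁻¹, hinv, Matrix.mul_one]
    abel
  rw [hexp] at htr
  simp only [Matrix.trace_add, Matrix.trace_sub, Complex.add_re, Complex.sub_re,
    Matrix.trace_conjTranspose, Complex.star_def, Complex.conj_re] at htr
  have hh : (A⁻¹ * A * X).trace.re = X.trace.re := by
    rw [hinv', Matrix.one_mul]
  rw [hh] at htr
  linarith

/-- Convexity of `A ↦ tr (A⁻¹)` on positive definite Hermitian matrices. -/
theorem trace_inv_convex (n : ℕ) (A B : Matrix (Fin n) (Fin n) ℂ)
    (hA : A.PosDef) (hB : B.PosDef) (t : ℝ) (ht0 : 0 ≤ t) (ht1 : t ≤ 1) :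
    ((((t : ℂ) • A + ((1 - t : ℝ) : ℂ) • B)⁻¹).trace).re ≤
      t * ((A⁻¹).trace).re + (1 - t) * ((B⁻¹).trace).re := by
  rcases eq_or_lt_of_le ht0 with h0 | h0
  · simp [← h0]
  rcases eq_or_lt_of_le ht1 with h1 | h1
  · simp [h1]
  set M := (t : ℂ) • A + ((1 - t : ℝ) : ℂ) • B with hMdef
  have hM : M.PosDef := (posDef_smul' t h0 hA).add (posDef_smul' (1 - t) (by linarith) hB)
  set X := M⁻¹ with hX
  have hXh : X.IsHermitian := hM.isHermitian.inv
  have hXMX : Xᴴ * M * X = M⁻¹ := by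
    rw [hXh.eq, hX, Matrix.nonsing_inv_mul _ hM.det_pos.ne'.isUnit, Matrix.one_mul]
  have hkA := key_ineq hA X
  have hkB := key_ineq hB X
  have hsplit : (Xᴴ * M * X).trace.re = t * (Xᴴ * A * X).trace.re
      + (1 - t) * (Xᴴ * B * X).trace.re := by
    rw [hMdef]
    simp only [Matrix.mul_add, Matrix.add_mul, Matrix.mul_smul, Matrix.smul_mul,
      Matrix.trace_add, Matrix.trace_smul, Complex.add_re, Complex.smul_re]
    norm_num
  rw [hXMX] at hsplit
  have hM1 : (M⁻¹).trace.re = 2 * X.trace.re - (M⁻¹).trace.re := by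
    rw [← hX]; ring
  nlinarith [hkA, hkB, hsplit]
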